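/- Let G be a graph with at least two vertices, let v be a vertex of G, and let G' be the graph obtained from G by adding a new vertex v' and the edge vv'. For a set S' of vertices of G': S' is a type I set for v' in G' with L_{S'}(v') = −2 if and only if S' ⊆ V(G), S' is a type I set for v in G, and L_{S'}(v) = 2. -/

import Mathlib

/-- A set of vertices is independent: no two of its vertices are adjacent. -/
def IndepSet {V : Type*} (G : SimpleGraph V) (S : Set V) : Prop :=
  ∀ u ∈ S, ∀ w ∈ S, ¬ G.Adj u w

/-- `S` is a type I set for `v` in `G`: `S` is independent, every vertex
`u ∉ S ∪ {v}` has at least one and at most two neighbors in `S`, and `v` either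
belongs to `S` or has at most two neighbors in `S`. -/
def TypeISet {V : Type*} (G : SimpleGraph V) (v : V) (S : Set V) : Prop :=
  IndepSet G S ∧
    (∀ u, u ∉ S → u ≠ v →
      1 ≤ (S ∩ G.neighborSet u).ncard ∧ (S ∩ G.neighborSet u).ncard ≤ 2) ∧
    (v ∈ S ∨ (S ∩ G.neighborSet v).ncard ≤ 2)

/-- The labeling `L_S(v) = l` : `0` if `v ∈ S`; `k ≥ 1` if `v ∉ S` and `v` has exactly
`k` neighbors in `S`; `-1` if `N[v] ∩ S = ∅` and every neighbor of `v` has exactly one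
neighbor in `S`; `-2` if `N[v] ∩ S = ∅` and some neighbor of `v` has exactly two
neighbors in `S`. -/
def HasLabel {V : Type*} (G : SimpleGraph V) (v : V) (S : Set V) (l : ℤ) : Prop :=
  (v ∈ S ∧ l = 0) ∨
  (v ∉ S ∧ ∃ k : ℕ, 1 ≤ k ∧ (S ∩ G.neighborSet v).ncard = k ∧ l = (k : ℤ)) ∨
  (v ∉ S ∧ S ∩ G.neighborSet v = ∅ ∧
    (∀ u ∈ G.neighborSet v, (S ∩ G.neighborSet u).ncard = 1) ∧ l = -1) ∨
  (v ∉ S ∧ S ∩ G.neighborSet v = ∅ ∧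
    (∃ u ∈ G.neighborSet v, (S ∩ G.neighborSet u).ncard = 2) ∧ l = -2)

/-- The star `K_{1,r}` with center `none` and the `r` leaves `some i`. -/
def starGraph (r : ℕ) : SimpleGraph (Option (Fin r)) where
  Adj a b := (a = none ∧ b ≠ none) ∨ (a ≠ none ∧ b = none)
  symm := by constructor; intro a b h; tauto
  loopless := by constructor; intro a h; tauto

/-- The graph obtained from `G` by adding a new vertex `none` adjacent only to `v`. -/
def addLeaf {V : Type*} (G : SimpleGraph V) (v : V) : SimpleGraph (Option V) where
  Adj a b := match a, b with
    | some x, some y => G.Adj x y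
    | none, some y => y = v
    | some x, none => x = v
    | none, none => False
  symm := by
    constructor
    intro a b h
    match a, b with
    | some x, some y => exact h.symm
    | none, some y => exact h
    | some x, none => exact h
    | none, none => exact h
  loopless := by
    constructor
    intro a h
    match a with
    | some x => exact G.irrefl h
    | none => exact h

/-- The graph obtained from the disjoint union of `G` and `H` by adding the edge
between `v` (in `G`) and `v'` (in `H`). -/
def joinAt {V W : Type*} (G : SimpleGraph V) (H : SimpleGraph W) (v : V) (v' : W) :
    SimpleGraph (V ⊕ W) where
  Adj a b := match a, b with
    | Sum.inl x, Sum.inl y => G.Adj x y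
    | Sum.inr x, Sum.inr y => H.Adj x y
    | Sum.inl x, Sum.inr y => x = v ∧ y = v'
    | Sum.inr x, Sum.inl y => x = v' ∧ y = v
  symm := by
    constructor
    intro a b h
    match a, b with
    | Sum.inl x, Sum.inl y => exact h.symm
    | Sum.inr x, Sum.inr y => exact h.symm
    | Sum.inl x, Sum.inr y => exact ⟨h.2, h.1⟩
    | Sum.inr x, Sum.inl y => exact ⟨h.2, h.1⟩
  loopless := by
    constructor
    intro a h
    match a with
    | Sum.inl x => exact G.irrefl h
    | Sum.inr x => exact H.irrefl h

lemma addLeaf_adj_some_some {V : Type*} (G : SimpleGraph V) (v x y : V) :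
    (addLeaf G v).Adj (some x) (some y) ↔ G.Adj x y := Iff.rfl

lemma addLeaf_nb_none {V : Type*} (G : SimpleGraph V) (v : V) :
    (addLeaf G v).neighborSet none = {some v} := by
  ext a
  cases a with
  | none => simp [SimpleGraph.neighborSet, addLeaf]
  | some y =>
    simp only [SimpleGraph.mem_neighborSet, Set.mem_singleton_iff]
    constructor
    · intro h; exact congrArg some h
    · intro h; cases h; rfl

lemma inter_nb {V : Type*} (G : SimpleGraph V) (v : V) (S : Set V) (x : V) :
    (some '' S : Set (Option V)) ∩ (addLeaf G v).neighborSet (some x)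
      = some '' (S ∩ G.neighborSet x) := by
  ext a
  cases a with
  | none => simp [SimpleGraph.neighborSet, addLeaf]
  | some y =>
    simp only [Set.mem_inter_iff, Set.mem_image, SimpleGraph.mem_neighborSet]
    constructor
    · rintro ⟨⟨b, hb, hb'⟩, hadj⟩
      obtain rfl : b = y := Option.some_injective V hb'
      exact ⟨b, ⟨hb, hadj⟩, rfl⟩
    · rintro ⟨b, ⟨hb, hadj⟩, hb'⟩
      obtain rfl : b = y := Option.some_injective V hb'
      exact ⟨⟨b, hb, rfl⟩, hadj⟩

theorem statement11 {V : Type*} [Fintype V] [Nontrivial V] (G : SimpleGraph V)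
    (v : V) (S' : Set (Option V)) :
    (TypeISet (addLeaf G v) none S' ∧ HasLabel (addLeaf G v) none S' (-2)) ↔
      ∃ S : Set V, S' = some '' S ∧ TypeISet G v S ∧ HasLabel G v S 2 := by
  have hinj := Option.some_injective V
  constructor
  · rintro ⟨⟨hind, hcond, _⟩, hL⟩
    have hlab : none ∉ S' ∧ S' ∩ (addLeaf G v).neighborSet none = ∅ ∧
        (S' ∩ (addLeaf G v).neighborSet (some v)).ncard = 2 := by
      rcases hL with ⟨_, h0⟩ | ⟨_, k, hk, _, hk2⟩ | ⟨_, _, _, h⟩ | ⟨hn, he, ⟨u, hu, h2⟩, _⟩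
      · omega
      · omega
      · omega
      · rw [addLeaf_nb_none] at hu
        cases hu
        exact ⟨hn, he, h2⟩
    obtain ⟨hnone, hemp, h2⟩ := hlab
    have hsv : some v ∉ S' := by
      intro h
      have : some v ∈ S' ∩ (addLeaf G v).neighborSet none :=
        ⟨h, by rw [addLeaf_nb_none]; rfl⟩
      rw [hemp] at this
      exact this
    set S : Set V := some ⁻¹' S' with hS
    have hS' : S' = some '' S := by
      ext a
      cases a with
      | none => simp [hS, hnone]
      | some y => simp [hS]
    have hcard : ∀ x : V, (S' ∩ (addLeaf G v).neighborSet (some x)).ncard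
        = (S ∩ G.neighborSet x).ncard := by
      intro x
      rw [hS', inter_nb, Set.ncard_image_of_injective _ hinj]
    refine ⟨S, hS', ⟨?_, ?_, ?_⟩, ?_⟩
    · intro u hu w hw hadj
      exact hind (some u) hu (some w) hw hadj
    · intro u hu hune
      have h := hcond (some u) hu (by simp)
      rw [hcard] at h
      exact h
    · exact Or.inr (by rw [← hcard]; omega)
    · refine Or.inr (Or.inl ⟨hsv, 2, by norm_num, ?_, rfl⟩)
      rw [← hcard]
      exact h2
  · rintro ⟨S, rfl, ⟨hind, hcond, _⟩, hL⟩
    have hlab : v ∉ S ∧ (S ∩ G.neighborSet v).ncard = 2 := by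
      rcases hL with ⟨_, h0⟩ | ⟨hv, k, hk, hkc, hk2⟩ | ⟨_, _, _, h⟩ | ⟨_, _, _, h⟩
      · omega
      · have : k = 2 := by omega
        exact ⟨hv, by rw [hkc, this]⟩
      · omega
      · omega
    obtain ⟨hv, hc2⟩ := hlab
    have hsv : some v ∉ (some '' S : Set (Option V)) := by
      intro h
      obtain ⟨b, hb, hb'⟩ := h
      cases hinj hb'
      exact hv hb
    have hcard : ∀ x : V, ((some '' S : Set (Option V)) ∩ (addLeaf G v).neighborSet (some x)).ncard
        = (S ∩ G.neighborSet x).ncard := by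
      intro x
      rw [inter_nb, Set.ncard_image_of_injective _ hinj]
    have hempty : (some '' S : Set (Option V)) ∩ (addLeaf G v).neighborSet none = ∅ := by
      rw [addLeaf_nb_none]
      ext a
      simp only [Set.mem_inter_iff, Set.mem_singleton_iff, Set.mem_empty_iff_false, iff_false]
      rintro ⟨ha, rfl⟩
      exact hsv ha
    have hnmem : (none : Option V) ∉ (some '' S : Set (Option V)) := by
      rintro ⟨b, _, hb'⟩
      exact Option.some_ne_none b hb'
    refine ⟨⟨?_, ?_, ?_⟩, ?_⟩
    · rintro a ⟨x, hx, rfl⟩ b ⟨y, hy, rfl⟩ hadj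
      exact hind x hx y hy hadj
    · intro u hu hune
      cases u with
      | none => exact absurd rfl hune
      | some x =>
        have hxS : x ∉ S := fun h => hu ⟨x, h, rfl⟩
        rw [hcard]
        by_cases hxv : x = v
        · subst hxv
          rw [hc2]
          omega
        · exact hcond x hxS hxv
    · refine Or.inr ?_
      rw [hempty]
      simp
    · refine Or.inr (Or.inr (Or.inr ⟨hnmem, hempty, ⟨some v, ?_, ?_⟩, rfl⟩))
      · rw [addLeaf_nb_none]; rfl
      · rw [hcard]; exact hc2
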